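/- Let 𝔽 be a field and u ∈ 𝔽^{1×N} a row vector. Let {I₁, ..., I_m} be the partition of {1,...,N} into level sets of u (indices with equal entries). Then the intersection over n ≥ 0 of the kernels of the entrywise powers u^{∘n} (viewed as linear functionals) equals the direct sum over j of the kernel of the all-ones functional on coordinates I_j, i.e., {v : Σ_{i ∈ I_j} v_i = 0 for all j}. -/

import Mathlib

open scoped Classical

/-- Let `𝔽` be a field and `u` a row vector of length `N`. A vector `v` is killed
by every entrywise power `u^{∘n}` (with `u^{∘0}` the all-ones row) if and only if
the coordinates of `v` sum to zero over each level set of `u`. -/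
theorem stmt17 {𝔽 : Type*} [Field 𝔽] {N : ℕ} (u : Fin N → 𝔽) (v : Fin N → 𝔽) :
    (∀ n : ℕ, ∑ i, u i ^ n * v i = 0) ↔
      ∀ i₀ : Fin N, ∑ i ∈ Finset.univ.filter (fun i => u i = u i₀), v i = 0 := by
  set T : Finset 𝔽 := Finset.univ.image u with hT
  set S : 𝔽 → 𝔽 := fun c => ∑ i ∈ Finset.univ.filter (fun i => u i = c), v i with hS
  have fiber : ∀ n : ℕ, ∑ c ∈ T, c ^ n * S c = ∑ i, u i ^ n * v i := by
    intro n
    rw [← Finset.sum_fiberwise_of_maps_to (g := u) (t := T)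
      (fun i _ => Finset.mem_image_of_mem u (Finset.mem_univ i))]
    refine Finset.sum_congr rfl fun c _ => ?_
    rw [hS, Finset.mul_sum]
    refine Finset.sum_congr rfl fun i hi => ?_
    rw [(Finset.mem_filter.mp hi).2]
  constructor
  · intro h i₀
    have key : ∀ n : ℕ, ∑ c ∈ T, c ^ n * S c = 0 := fun n => (fiber n).trans (h n)
    have hpoly : ∀ p : Polynomial 𝔽, ∑ c ∈ T, p.eval c * S c = 0 := by
      intro p
      calc ∑ c ∈ T, p.eval c * S c
          = ∑ c ∈ T, ∑ k ∈ Finset.range (p.natDegree + 1),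
              p.coeff k * (c ^ k * S c) := by
            refine Finset.sum_congr rfl fun c _ => ?_
            rw [Polynomial.eval_eq_sum_range, Finset.sum_mul]
            simp [mul_assoc]
        _ = ∑ k ∈ Finset.range (p.natDegree + 1),
              p.coeff k * ∑ c ∈ T, c ^ k * S c := by
            rw [Finset.sum_comm]
            simp [Finset.mul_sum]
        _ = 0 := by simp [key]
    have hu : u i₀ ∈ T := Finset.mem_image_of_mem u (Finset.mem_univ i₀)
    have hinj : Set.InjOn (id : 𝔽 → 𝔽) T := Set.injOn_id _
    have := hpoly (Lagrange.basis T id (u i₀))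
    rw [Finset.sum_eq_single (u i₀)
        (fun c hc hne => by
          rw [show Polynomial.eval c (Lagrange.basis T id (u i₀))
              = Polynomial.eval (id c) (Lagrange.basis T id (u i₀)) from rfl,
            Lagrange.eval_basis_of_ne (Ne.symm hne) hc, zero_mul])
        (fun h => absurd hu h)] at this
    rw [show Polynomial.eval (u i₀) (Lagrange.basis T id (u i₀))
        = Polynomial.eval (id (u i₀)) (Lagrange.basis T id (u i₀)) from rfl,
      Lagrange.eval_basis_self hinj hu, one_mul] at this
    exact this
  · intro h n
    rw [← fiber n]
    refine Finset.sum_eq_zero fun c hc => ?_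
    obtain ⟨i₀, _, rfl⟩ := Finset.mem_image.mp hc
    rw [hS]
    simp [h i₀]
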